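/- Let f be a monotone submodular function with f(∅)=0 on finite set E, x ∈ ℝ≥0^E, and w^x the water level vector. Then the Lovász extension of f evaluated at w^x equals the total mass of x: L_f(w^x) = ∑_{e ∈ E} x_e, where L_f(w) := ∫_0^∞ f({e : w_e ≥ t}) dt. -/

import Mathlib

open Finset MeasureTheory

variable {E : Type*} [Fintype E] [DecidableEq E]

noncomputable def waterLevel (f : Finset E → ℝ) (x : E → ℝ) (e : E) : ℝ :=
  sSup {r | ∃ S : Finset E, e ∈ S ∧
    r = sInf {q | ∃ T : Finset E, f ({e} ∪ T) - f T ≠ 0 ∧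
      q = (∑ a ∈ S \ T, x a) / (f (S ∪ T) - f T)}}

open Classical in
/-- Lovász extension: `L_f(w) = ∫_0^∞ f({e : w_e ≥ t}) dt`. -/
noncomputable def lovasz (f : Finset E → ℝ) (w : E → ℝ) : ℝ :=
  ∫ t in Set.Ioi (0 : ℝ), f (Finset.univ.filter (fun e => t ≤ w e))

section Helpers
variable (f : Finset E → ℝ) (x : E → ℝ)

def innerSet (e : E) (S : Finset E) : Set ℝ :=
  {q | ∃ T : Finset E, f ({e} ∪ T) - f T ≠ 0 ∧
      q = (∑ a ∈ S \ T, x a) / (f (S ∪ T) - f T)}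

def outerSet (e : E) : Set ℝ :=
  {r | ∃ S : Finset E, e ∈ S ∧ r = sInf (innerSet f x e S)}

lemma waterLevel_def (e : E) : waterLevel f x e = sSup (outerSet f x e) := rfl

lemma innerSet_finite (e : E) (S : Finset E) : (innerSet f x e S).Finite :=
  (Set.finite_range fun T : Finset E => (∑ a ∈ S \ T, x a) / (f (S ∪ T) - f T)).subset
    (by rintro q ⟨T, _, rfl⟩; exact ⟨T, rfl⟩)

lemma outerSet_finite (e : E) : (outerSet f x e).Finite :=
  (Set.finite_range fun S : Finset E => sInf (innerSet f x e S)).subset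
    (by rintro r ⟨S, _, rfl⟩; exact ⟨S, rfl⟩)

variable {f x}

lemma innerSet_nonempty (h0 : f ∅ = 0) (hpos : ∀ e : E, 0 < f {e}) (e : E) (S : Finset E) :
    (innerSet f x e S).Nonempty := by
  refine ⟨(∑ a ∈ S \ ∅, x a) / (f (S ∪ ∅) - f ∅), ∅, ?_, rfl⟩
  simp [h0, (hpos e).ne']

lemma outerSet_nonempty (e : E) : (outerSet f x e).Nonempty :=
  ⟨sInf (innerSet f x e {e}), {e}, mem_singleton_self e, rfl⟩

lemma denom_pos (hmono : ∀ A B : Finset E, A ⊆ B → f A ≤ f B) {e : E} {T : Finset E}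
    (hT : f ({e} ∪ T) - f T ≠ 0) {S : Finset E} (heS : e ∈ S) :
    0 < f (S ∪ T) - f T := by
  have h1 : f T ≤ f ({e} ∪ T) := hmono _ _ subset_union_right
  have h2 : f ({e} ∪ T) ≤ f (S ∪ T) :=
    hmono _ _ (union_subset_union_left (by simpa using heS))
  rcases lt_or_eq_of_le h1 with h | h
  · linarith
  · exact absurd (by linarith) hT

lemma innerSet_nonneg (hmono : ∀ A B : Finset E, A ⊆ B → f A ≤ f B) (hx : ∀ e, 0 ≤ x e)
    {e : E} {S : Finset E} (heS : e ∈ S) {q : ℝ} (hq : q ∈ innerSet f x e S) : 0 ≤ q := by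
  obtain ⟨T, hT, rfl⟩ := hq
  exact div_nonneg (Finset.sum_nonneg fun a _ => hx a) (denom_pos hmono hT heS).le

lemma waterLevel_mem (e : E) : waterLevel f x e ∈ outerSet f x e :=
  (outerSet_nonempty e).csSup_mem (outerSet_finite f x e)

lemma le_waterLevel {e : E} {r : ℝ} (hr : r ∈ outerSet f x e) : r ≤ waterLevel f x e :=
  le_csSup (outerSet_finite f x e).bddAbove hr

lemma waterLevel_le {e : E} {b : ℝ} (hb : ∀ r ∈ outerSet f x e, r ≤ b) :
    waterLevel f x e ≤ b :=
  csSup_le (outerSet_nonempty e) hb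

lemma waterLevel_nonneg (hmono : ∀ A B : Finset E, A ⊆ B → f A ≤ f B)
    (h0 : f ∅ = 0) (hpos : ∀ e : E, 0 < f {e}) (hx : ∀ e, 0 ≤ x e) (e : E) :
    0 ≤ waterLevel f x e := by
  refine le_trans ?_ (le_waterLevel ⟨{e}, mem_singleton_self e, rfl⟩)
  exact le_csInf (innerSet_nonempty h0 hpos e {e})
    (fun q hq => innerSet_nonneg hmono hx (mem_singleton_self e) hq)

lemma dimin (hmono : ∀ A B : Finset E, A ⊆ B → f A ≤ f B)
    (hsub : ∀ A B : Finset E, f (A ∪ B) + f (A ∩ B) ≤ f A + f B)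
    (A B D : Finset E) (hAB : A ⊆ B) :
    f (D ∪ B) + f A ≤ f (D ∪ A) + f B := by
  have h := hsub (D ∪ A) B
  have hU : (D ∪ A) ∪ B = D ∪ B := by rw [union_assoc, union_eq_right.2 hAB]
  have hI : A ⊆ (D ∪ A) ∩ B := subset_inter subset_union_right hAB
  have h2 := hmono _ _ hI
  rw [hU] at h; linarith

lemma submod_contract
    (hsub : ∀ A B : Finset E, f (A ∪ B) + f (A ∩ B) ≤ f A + f B) (C A B : Finset E) :
    f ((A ∪ B) ∪ C) + f ((A ∩ B) ∪ C) ≤ f (A ∪ C) + f (B ∪ C) := by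
  have h := hsub (A ∪ C) (B ∪ C)
  have hU : (A ∪ C) ∪ (B ∪ C) = (A ∪ B) ∪ C := by ext a; simp [mem_union]; tauto
  have hI : (A ∪ C) ∩ (B ∪ C) = (A ∩ B) ∪ C := by ext a; simp [mem_union, mem_inter]; tauto
  rw [hU, hI] at h; exact h

end Helpers

set_option linter.unusedSectionVars false
set_option maxHeartbeats 1000000

open Classical in
lemma auxChain (f : Finset E → ℝ) (x : E → ℝ)
    (hmono : ∀ A B : Finset E, A ⊆ B → f A ≤ f B)
    (hsub : ∀ A B : Finset E, f (A ∪ B) + f (A ∩ B) ≤ f A + f B)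
    (h0 : f ∅ = 0) (hpos : ∀ e : E, 0 < f {e}) (hx : ∀ e, 0 ≤ x e) :
    ∀ n : ℕ, ∀ C : Finset E, (Finset.univ \ C).card ≤ n → ∀ t₀ : ℝ,
    (∀ e ∉ C, 0 < f (insert e C) - f C) →
    (∀ A : Finset E, Disjoint A C → A.Nonempty → (∑ a ∈ A, x a) < t₀ * (f (A ∪ C) - f C)) →
    (∀ e ∈ C, t₀ ≤ waterLevel f x e) →
    (∀ t : ℝ, 0 ≤ t → t ≤ t₀ → ∀ T : Finset E, t * (f (C ∪ T) - f T) ≤ ∑ a ∈ C \ T, x a) →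
    (∀ e ∉ C, waterLevel f x e < t₀) ∧
    (∀ v : ℝ, v < t₀ →
      (∑ e ∈ Finset.univ.filter (fun e => e ∉ C ∧ waterLevel f x e = v), x e) =
        v * (f (Finset.univ.filter (fun e => v ≤ waterLevel f x e)) -
             f (Finset.univ.filter (fun e => v < waterLevel f x e)))) := by
  intro n
  induction n with
  | zero =>
    intro C hcard t₀ hspan hcap hC hkey
    have hCu : C = Finset.univ := by
      have h1 : Finset.univ \ C = ∅ := card_eq_zero.mp (Nat.le_zero.mp hcard)
      have h2 := sdiff_eq_empty_iff_subset.mp h1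
      exact subset_antisymm (subset_univ C) h2
    subst hCu
    constructor
    · intro e he; exact absurd (mem_univ e) he
    · intro v hv
      have hfilt : (Finset.univ.filter (fun e => e ∉ (Finset.univ : Finset E) ∧ waterLevel f x e = v)) = ∅ := by
        refine filter_eq_empty_iff.mpr ?_
        intro e _ h
        exact h.1 (mem_univ e)
      have hge : (Finset.univ.filter (fun e => v ≤ waterLevel f x e)) = Finset.univ := by
        refine filter_eq_self.mpr fun e _ => le_trans hv.le (hC e (mem_univ e))
      have hgt : (Finset.univ.filter (fun e => v < waterLevel f x e)) = Finset.univ := by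
        refine filter_eq_self.mpr fun e _ => lt_of_lt_of_le hv (hC e (mem_univ e))
      rw [hfilt, hge, hgt]
      simp
  | succ n ih =>
    intro C hcard t₀ hspan hcap hC hkey
    by_cases hRe : Finset.univ \ C = ∅
    · have h2 := sdiff_eq_empty_iff_subset.mp hRe
      have hCu : C = Finset.univ := subset_antisymm (subset_univ C) h2
      subst hCu
      constructor
      · intro e he; exact absurd (mem_univ e) he
      · intro v hv
        have hfilt : (Finset.univ.filter (fun e => e ∉ (Finset.univ : Finset E) ∧ waterLevel f x e = v)) = ∅ := by
          refine filter_eq_empty_iff.mpr ?_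
          intro e _ h
          exact h.1 (mem_univ e)
        have hge : (Finset.univ.filter (fun e => v ≤ waterLevel f x e)) = Finset.univ := by
          refine filter_eq_self.mpr fun e _ => le_trans hv.le (hC e (mem_univ e))
        have hgt : (Finset.univ.filter (fun e => v < waterLevel f x e)) = Finset.univ := by
          refine filter_eq_self.mpr fun e _ => lt_of_lt_of_le hv (hC e (mem_univ e))
        rw [hfilt, hge, hgt]
        simp
    · -- main case
      set R : Finset E := Finset.univ \ C with hR
      have hRne : R.Nonempty := nonempty_iff_ne_empty.mpr hRe
      set P : Finset (Finset E) := R.powerset.filter Finset.Nonempty with hPdef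
      have hP : P.Nonempty := ⟨R, by simp [hPdef, hRne]⟩
      set t1 : ℝ := P.sup' hP (fun B => (∑ a ∈ B, x a) / (f (B ∪ C) - f C)) with ht1
      have margpos : ∀ B : Finset E, B ⊆ R → B.Nonempty → 0 < f (B ∪ C) - f C := by
        intro B hBR hBne
        obtain ⟨b, hb⟩ := hBne
        have hbC : b ∉ C := (mem_sdiff.mp (hBR hb)).2
        have h1 := hspan b hbC
        have h2 : insert b C ⊆ B ∪ C := by
          intro a ha
          rcases mem_insert.mp ha with rfl | ha
          · exact mem_union_left _ hb
          · exact mem_union_right _ ha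
        have := hmono _ _ h2
        linarith
      have hub : ∀ B : Finset E, B ⊆ R → (∑ a ∈ B, x a) ≤ t1 * (f (B ∪ C) - f C) := by
        intro B hBR
        rcases B.eq_empty_or_nonempty with rfl | hBne
        · simp
        · have hmem : B ∈ P := by simp [hPdef, mem_powerset.mpr hBR, hBne]
          have h1 := Finset.le_sup' (fun B => (∑ a ∈ B, x a) / (f (B ∪ C) - f C)) hmem
          have h2 := margpos B hBR hBne
          rw [div_le_iff₀ h2] at h1
          linarith [h1]
      obtain ⟨B₀, hB₀P, hB₀⟩ := Finset.exists_mem_eq_sup' hP (fun B => (∑ a ∈ B, x a) / (f (B ∪ C) - f C))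
      rw [← ht1] at hB₀
      have hB₀R : B₀ ⊆ R := mem_powerset.mp (mem_filter.mp hB₀P).1
      have hB₀ne : B₀.Nonempty := (mem_filter.mp hB₀P).2
      have hB₀pos := margpos B₀ hB₀R hB₀ne
      have ht1nn : 0 ≤ t1 := by
        rw [hB₀]
        exact div_nonneg (Finset.sum_nonneg fun a _ => hx a) hB₀pos.le
      set M : Finset (Finset E) :=
        P.filter (fun B => (∑ a ∈ B, x a) = t1 * (f (B ∪ C) - f C)) with hMdef
      have hB₀M : B₀ ∈ M := by
        refine mem_filter.mpr ⟨hB₀P, ?_⟩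
        rw [hB₀]
        field_simp
      set A : Finset E := M.sup id with hA
      have hAR' : M.sup id ≤ R := Finset.sup_le fun B hB =>
        Finset.le_iff_subset.mpr (mem_powerset.mp (mem_filter.mp (mem_filter.mp hB).1).1)
      have hAR : A ⊆ R := by rw [hA]; exact Finset.le_iff_subset.mp hAR'
      have hAmax : (∑ a ∈ A, x a) = t1 * (f (A ∪ C) - f C) := by
        have hbot : (∅ : Finset E) ⊆ R ∧ (∑ a ∈ (∅ : Finset E), x a)
            = t1 * (f ((∅ : Finset E) ∪ C) - f C) := ⟨empty_subset R, by simp⟩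
        have hstep : ∀ a : Finset E, (a ⊆ R ∧ (∑ e ∈ a, x e) = t1 * (f (a ∪ C) - f C)) →
            ∀ b : Finset E, (b ⊆ R ∧ (∑ e ∈ b, x e) = t1 * (f (b ∪ C) - f C)) →
            ((a ∪ b) ⊆ R ∧ (∑ e ∈ a ∪ b, x e) = t1 * (f ((a ∪ b) ∪ C) - f C)) := by
          intro a ha b hb
          refine ⟨union_subset ha.1 hb.1, ?_⟩
          have hsum := Finset.sum_union_inter (s₁ := a) (s₂ := b) (f := x)
          have h2 := submod_contract hsub C a b
          have h3 := hub (a ∪ b) (union_subset ha.1 hb.1)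
          have h4 := hub (a ∩ b) ((inter_subset_left).trans ha.1)
          have h5 := mul_le_mul_of_nonneg_left h2 ht1nn
          nlinarith [ha.2, hb.2]
        have hmem : ∀ B ∈ M, B ⊆ R ∧ (∑ e ∈ B, x e) = t1 * (f (B ∪ C) - f C) := by
          intro B hB
          exact ⟨mem_powerset.mp (mem_filter.mp (mem_filter.mp hB).1).1,
            (mem_filter.mp hB).2⟩
        have hind := Finset.sup_induction (s := M) (f := id)
          (p := fun B : Finset E => B ⊆ R ∧ (∑ e ∈ B, x e) = t1 * (f (B ∪ C) - f C))
          hbot hstep hmem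
        rw [← hA] at hind
        exact hind.2
      have hB₀A : B₀ ⊆ A := Finset.le_sup (f := id) hB₀M
      have hAne : A.Nonempty := hB₀ne.mono hB₀A
      have hmargA : 0 < f (A ∪ C) - f C := margpos A hAR hAne
      have hdisj : Disjoint A C := disjoint_left.mpr fun a ha hc =>
        (mem_sdiff.mp (hAR ha)).2 hc
      have ht1t0 : t1 < t₀ := by
        have h1 := hcap A hdisj hAne
        rw [hAmax] at h1
        exact lt_of_mul_lt_mul_right h1 (by linarith)
      have hspan' : ∀ e ∉ C ∪ A, 0 < f (insert e (C ∪ A)) - f (C ∪ A) := by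
        intro e he
        have heC : e ∉ C := fun h => he (mem_union_left _ h)
        have heA : e ∉ A := fun h => he (mem_union_right _ h)
        have hmono0 : f (C ∪ A) ≤ f (insert e (C ∪ A)) := hmono _ _ (subset_insert _ _)
        by_contra hcon
        push_neg at hcon
        have heq : f (insert e (C ∪ A)) = f (C ∪ A) := le_antisymm (by linarith) hmono0
        have hBR : insert e A ⊆ R := by
          intro a ha
          rcases mem_insert.mp ha with rfl | ha
          · exact mem_sdiff.mpr ⟨mem_univ a, heC⟩
          · exact hAR ha
        have hBC : f (insert e A ∪ C) = f (A ∪ C) := by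
          have e1 : insert e A ∪ C = insert e (C ∪ A) := by
            ext a; simp only [mem_insert, mem_union]; tauto
          have e2 : A ∪ C = C ∪ A := union_comm _ _
          rw [e1, e2, heq]
        have hle := hub (insert e A) hBR
        have hge : t1 * (f (insert e A ∪ C) - f C) ≤ ∑ a ∈ insert e A, x a := by
          rw [hBC, Finset.sum_insert heA]
          linarith [hx e, hAmax]
        have hBM : insert e A ∈ M := mem_filter.mpr ⟨mem_filter.mpr
          ⟨mem_powerset.mpr hBR, insert_nonempty e A⟩, le_antisymm hle hge⟩
        have hsubA : insert e A ⊆ A := Finset.le_iff_subset.mp (Finset.le_sup (f := id) hBM)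
        exact heA (hsubA (mem_insert_self e A))
      have hkey' : ∀ t : ℝ, 0 ≤ t → t ≤ t1 → ∀ T : Finset E,
          t * (f ((C ∪ A) ∪ T) - f T) ≤ ∑ a ∈ (C ∪ A) \ T, x a := by
        intro t ht0 htt1 T
        have k1 := hkey t ht0 (htt1.trans ht1t0.le) T
        have hsplit : (C ∪ A) \ T = (C \ T) ∪ (A \ T) := union_sdiff_distrib C A T
        have hdisj2 : Disjoint (C \ T) (A \ T) :=
          hdisj.symm.mono sdiff_subset sdiff_subset
        have hsum : ∑ a ∈ (C ∪ A) \ T, x a = (∑ a ∈ C \ T, x a) + ∑ a ∈ A \ T, x a := by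
          rw [hsplit, Finset.sum_union hdisj2]
        have hAT : ∑ a ∈ A \ T, x a = (∑ a ∈ A, x a) - ∑ a ∈ A ∩ T, x a := by
          rw [← Finset.sdiff_inter_self_left A T]
          exact Finset.sum_sdiff_eq_sub inter_subset_left
        have h2 := hub (A ∩ T) (inter_subset_left.trans hAR)
        have hd := dimin hmono hsub ((A ∩ T) ∪ C) (C ∪ T) A
          (union_subset (inter_subset_right.trans subset_union_right) subset_union_left)
        have e1 : A ∪ ((A ∩ T) ∪ C) = A ∪ C := by
          ext a; simp only [mem_union, mem_inter]; tauto
        have e2 : A ∪ (C ∪ T) = (C ∪ A) ∪ T := by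
          ext a; simp only [mem_union]; tauto
        rw [e1, e2] at hd
        have hbr : (0:ℝ) ≤ f (A ∪ C) - f ((A ∩ T) ∪ C) :=
          sub_nonneg.mpr (hmono _ _ (union_subset
            (inter_subset_left.trans subset_union_left) subset_union_right))
        have m1 : t * (f ((C ∪ A) ∪ T) - f (C ∪ T)) ≤ t * (f (A ∪ C) - f ((A ∩ T) ∪ C)) :=
          mul_le_mul_of_nonneg_left (by linarith) ht0
        have m2 : t * (f (A ∪ C) - f ((A ∩ T) ∪ C)) ≤ t1 * (f (A ∪ C) - f ((A ∩ T) ∪ C)) :=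
          mul_le_mul_of_nonneg_right htt1 hbr
        have expand : t1 * (f (A ∪ C) - f ((A ∩ T) ∪ C))
            = t1 * (f (A ∪ C) - f C) - t1 * (f ((A ∩ T) ∪ C) - f C) := by ring
        have goalexp : t * (f ((C ∪ A) ∪ T) - f T)
            = t * (f ((C ∪ A) ∪ T) - f (C ∪ T)) + t * (f (C ∪ T) - f T) := by ring
        rw [hsum, hAT]
        linarith [hAmax, h2, k1, m1, m2, expand, goalexp]
      have hwA : ∀ e ∈ A, waterLevel f x e = t1 := by
        intro e heA
        have heC : e ∉ C := disjoint_left.mp hdisj heA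
        apply le_antisymm
        · apply waterLevel_le
          rintro r ⟨S, heS, rfl⟩
          have hTC : f ({e} ∪ C) - f C ≠ 0 := by
            have h1 := hspan e heC
            rw [insert_eq] at h1
            exact h1.ne'
          have hq : (∑ a ∈ S \ C, x a) / (f (S ∪ C) - f C) ∈ innerSet f x e S := ⟨C, hTC, rfl⟩
          refine le_trans (csInf_le (innerSet_finite f x e S).bddBelow hq) ?_
          have h1 : S \ C ⊆ R := fun a ha => mem_sdiff.mpr ⟨mem_univ a, (mem_sdiff.mp ha).2⟩
          have hne : (S \ C).Nonempty := ⟨e, mem_sdiff.mpr ⟨heS, heC⟩⟩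
          have hdpos := margpos (S \ C) h1 hne
          have hle := hub (S \ C) h1
          have hSC : (S \ C) ∪ C = S ∪ C := sdiff_union_self_eq_union
          rw [hSC] at hdpos hle
          rw [div_le_iff₀ hdpos]
          linarith
        · refine le_trans ?_ (le_waterLevel ⟨C ∪ A, mem_union_right _ heA, rfl⟩)
          refine le_csInf (innerSet_nonempty h0 hpos e (C ∪ A)) ?_
          rintro q ⟨T, hT, rfl⟩
          have hd := denom_pos hmono hT (mem_union_right C heA)
          have hk := hkey' t1 ht1nn le_rfl T
          rw [le_div_iff₀ hd]
          linarith
      have hconc1 : ∀ e ∉ C, waterLevel f x e < t₀ := by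
        intro e heC
        obtain ⟨S, heS, hw⟩ := waterLevel_mem (f := f) (x := x) e
        have hTC : f ({e} ∪ C) - f C ≠ 0 := by
          have h1 := hspan e heC; rw [insert_eq] at h1; exact h1.ne'
        have hq : (∑ a ∈ S \ C, x a) / (f (S ∪ C) - f C) ∈ innerSet f x e S := ⟨C, hTC, rfl⟩
        have hSR : S \ C ⊆ R := fun a ha => mem_sdiff.mpr ⟨mem_univ a, (mem_sdiff.mp ha).2⟩
        have hne : (S \ C).Nonempty := ⟨e, mem_sdiff.mpr ⟨heS, heC⟩⟩
        have hdpos := margpos (S \ C) hSR hne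
        have hcap2 := hcap (S \ C) (disjoint_left.mpr fun a ha => (mem_sdiff.mp ha).2) hne
        have hSC : (S \ C) ∪ C = S ∪ C := sdiff_union_self_eq_union
        rw [hSC] at hdpos hcap2
        calc waterLevel f x e = sInf (innerSet f x e S) := hw
          _ ≤ (∑ a ∈ S \ C, x a) / (f (S ∪ C) - f C) :=
              csInf_le (innerSet_finite f x e S).bddBelow hq
          _ < t₀ := (div_lt_iff₀ hdpos).mpr hcap2
      have hcap' : ∀ B : Finset E, Disjoint B (C ∪ A) → B.Nonempty →
          (∑ a ∈ B, x a) < t1 * (f (B ∪ (C ∪ A)) - f (C ∪ A)) := by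
        intro B hdB hBne
        by_contra hcon
        push_neg at hcon
        have hBC : Disjoint B C := hdB.mono_right subset_union_left
        have hBA : Disjoint B A := hdB.mono_right subset_union_right
        have hBR : B ⊆ R := fun a ha => mem_sdiff.mpr ⟨mem_univ a, disjoint_left.mp hBC ha⟩
        have hABR : A ∪ B ⊆ R := union_subset hAR hBR
        have hsumAB : ∑ a ∈ A ∪ B, x a = (∑ a ∈ A, x a) + ∑ a ∈ B, x a :=
          Finset.sum_union hBA.symm
        have e1 : B ∪ (C ∪ A) = (A ∪ B) ∪ C := by ext a; simp only [mem_union]; tauto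
        have e2 : C ∪ A = A ∪ C := union_comm _ _
        rw [e1, e2] at hcon
        have hge : t1 * (f ((A ∪ B) ∪ C) - f C) ≤ ∑ a ∈ A ∪ B, x a := by
          have exp : t1 * (f ((A ∪ B) ∪ C) - f C) =
            t1 * (f ((A ∪ B) ∪ C) - f (A ∪ C)) + t1 * (f (A ∪ C) - f C) := by ring
          rw [exp, hsumAB]
          linarith [hAmax, hcon]
        have hle := hub (A ∪ B) hABR
        have hABM : A ∪ B ∈ M := mem_filter.mpr ⟨mem_filter.mpr ⟨mem_powerset.mpr hABR,
          hAne.mono subset_union_left⟩, le_antisymm hle hge⟩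
        have hsubA : A ∪ B ⊆ A := Finset.le_iff_subset.mp (Finset.le_sup (f := id) hABM)
        obtain ⟨b, hb⟩ := hBne
        exact disjoint_left.mp hBA hb (hsubA (mem_union_right A hb))
      have hC' : ∀ e ∈ C ∪ A, t1 ≤ waterLevel f x e := by
        intro e he
        rcases mem_union.mp he with h | h
        · exact le_trans ht1t0.le (hC e h)
        · exact (hwA e h).ge
      have hcard' : (Finset.univ \ (C ∪ A)).card ≤ n := by
        have hsub1 : Finset.univ \ (C ∪ A) ⊆ R := by
          intro a ha
          rw [hR]
          exact mem_sdiff.mpr ⟨mem_univ a, fun h => (mem_sdiff.mp ha).2 (mem_union_left _ h)⟩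
        obtain ⟨a, haA⟩ := hAne
        have hanotin : a ∉ Finset.univ \ (C ∪ A) :=
          fun h => (mem_sdiff.mp h).2 (mem_union_right _ haA)
        have hss : Finset.univ \ (C ∪ A) ⊂ R :=
          (Finset.ssubset_iff_of_subset hsub1).mpr ⟨a, hAR haA, hanotin⟩
        have := card_lt_card hss
        omega
      obtain ⟨w1, w2⟩ := ih (C ∪ A) hcard' t1 hspan' hcap' hC' hkey'
      refine ⟨hconc1, ?_⟩
      intro v hv
      rcases lt_trichotomy v t1 with hvt | rfl | hvt
      · have hw2 := w2 v hvt
        have hfeq : Finset.univ.filter (fun e => e ∉ C ∧ waterLevel f x e = v)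
            = Finset.univ.filter (fun e => e ∉ C ∪ A ∧ waterLevel f x e = v) := by
          ext e
          simp only [mem_filter, mem_univ, true_and, mem_union]
          constructor
          · rintro ⟨heC, hwe⟩
            refine ⟨?_, hwe⟩
            rintro (h | h)
            · exact heC h
            · exact absurd hwe (by rw [hwA e h]; exact hvt.ne')
          · rintro ⟨h, hwe⟩
            exact ⟨fun hc => h (Or.inl hc), hwe⟩
        rw [hfeq]
        exact hw2
      · have hfib : Finset.univ.filter (fun e => e ∉ C ∧ waterLevel f x e = t1) = A := by
          ext e
          simp only [mem_filter, mem_univ, true_and]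
          constructor
          · rintro ⟨heC, hwe⟩
            by_contra heA
            have hno : e ∉ C ∪ A := fun h => (mem_union.mp h).elim heC heA
            exact absurd hwe (w1 e hno).ne
          · intro heA
            exact ⟨disjoint_left.mp hdisj heA, hwA e heA⟩
        have hge : Finset.univ.filter (fun e => t1 ≤ waterLevel f x e) = C ∪ A := by
          ext e
          simp only [mem_filter, mem_univ, true_and]
          constructor
          · intro hle
            by_contra he
            exact absurd hle (not_le.mpr (w1 e he))
          · exact hC' e
        have hgt : Finset.univ.filter (fun e => t1 < waterLevel f x e) = C := by
          ext e
          simp only [mem_filter, mem_univ, true_and]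
          constructor
          · intro hlt
            by_contra heC
            rcases _root_.em (e ∈ A) with h | h
            · rw [hwA e h] at hlt; exact lt_irrefl _ hlt
            · have hno : e ∉ C ∪ A := fun hm => (mem_union.mp hm).elim heC h
              exact absurd (w1 e hno) (not_lt.mpr hlt.le)
          · intro heC
            exact lt_of_lt_of_le ht1t0 (hC e heC)
        rw [hfib, hge, hgt, union_comm C A]
        exact hAmax
      · have hfib : Finset.univ.filter (fun e => e ∉ C ∧ waterLevel f x e = v) = ∅ := by
          refine filter_eq_empty_iff.mpr ?_
          rintro e _ ⟨heC, hwe⟩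
          rcases _root_.em (e ∈ A) with h | h
          · rw [hwA e h] at hwe; exact hvt.ne hwe
          · have hno : e ∉ C ∪ A := fun hm => (mem_union.mp hm).elim heC h
            have hlt := w1 e hno
            rw [hwe] at hlt
            exact lt_asymm hvt hlt
        have hge : Finset.univ.filter (fun e => v ≤ waterLevel f x e) = C := by
          ext e
          simp only [mem_filter, mem_univ, true_and]
          constructor
          · intro hle
            by_contra heC
            rcases _root_.em (e ∈ A) with h | h
            · rw [hwA e h] at hle; exact absurd hle (not_le.mpr hvt)
            · have hno : e ∉ C ∪ A := fun hm => (mem_union.mp hm).elim heC h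
              exact absurd hle (not_le.mpr ((w1 e hno).trans hvt))
          · intro heC
            exact (lt_of_lt_of_le hv (hC e heC)).le
        have hgt : Finset.univ.filter (fun e => v < waterLevel f x e) = C := by
          ext e
          simp only [mem_filter, mem_univ, true_and]
          constructor
          · intro hlt
            by_contra heC
            rcases _root_.em (e ∈ A) with h | h
            · rw [hwA e h] at hlt; exact lt_asymm hvt hlt
            · have hno : e ∉ C ∪ A := fun hm => (mem_union.mp hm).elim heC h
              exact absurd hlt (not_lt.mpr ((w1 e hno).trans hvt).le)
          · intro heC
            exact lt_of_lt_of_le hv (hC e heC)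
        rw [hfib, hge, hgt]
        simp


open Classical in
lemma fiber_eq (f : Finset E → ℝ) (x : E → ℝ)
    (hmono : ∀ A B : Finset E, A ⊆ B → f A ≤ f B)
    (hsub : ∀ A B : Finset E, f (A ∪ B) + f (A ∩ B) ≤ f A + f B)
    (h0 : f ∅ = 0) (hpos : ∀ e : E, 0 < f {e}) (hx : ∀ e, 0 ≤ x e) :
    ∀ v : ℝ,
      (∑ e ∈ Finset.univ.filter (fun e => waterLevel f x e = v), x e) =
        v * (f (Finset.univ.filter (fun e => v ≤ waterLevel f x e)) -
             f (Finset.univ.filter (fun e => v < waterLevel f x e))) := by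
  rcases isEmpty_or_nonempty E with hE | hE
  · intro v
    have h1 : (Finset.univ : Finset E) = ∅ := univ_eq_empty
    rw [h1]
    simp
  · set δ : ℝ := Finset.univ.inf' univ_nonempty (fun e => f {e}) with hδ
    have hδpos : 0 < δ := by
      rw [hδ, Finset.lt_inf'_iff]
      exact fun e _ => hpos e
    set X : ℝ := ∑ e : E, x e with hX
    have hXnn : 0 ≤ X := Finset.sum_nonneg fun e _ => hx e
    set t₀ : ℝ := X / δ + 1 with ht₀
    have hcap : ∀ A : Finset E, Disjoint A (∅ : Finset E) → A.Nonempty →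
        (∑ a ∈ A, x a) < t₀ * (f (A ∪ ∅) - f ∅) := by
      intro A _ hAne
      obtain ⟨a, ha⟩ := hAne
      have hfA : δ ≤ f A := le_trans (Finset.inf'_le _ (mem_univ a))
        (hmono {a} A (singleton_subset_iff.mpr ha))
      have hxA : (∑ e ∈ A, x e) ≤ X := by
        rw [hX]
        exact Finset.sum_le_sum_of_subset_of_nonneg (subset_univ A) (fun e _ _ => hx e)
      have h2 : X / δ * δ ≤ X / δ * f A :=
        mul_le_mul_of_nonneg_left hfA (div_nonneg hXnn hδpos.le)
      rw [div_mul_cancel₀ X hδpos.ne'] at h2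
      have h3 : X / δ * f A < t₀ * f A := by
        have ht : X / δ < t₀ := by rw [ht₀]; linarith
        exact mul_lt_mul_of_pos_right ht (lt_of_lt_of_le hδpos hfA)
      rw [union_empty, h0]
      have heq : t₀ * (f A - 0) = t₀ * f A := by ring
      rw [heq]
      calc (∑ a ∈ A, x a) ≤ X := hxA
        _ ≤ X / δ * f A := h2
        _ < t₀ * f A := h3
    have hspan : ∀ e ∉ (∅ : Finset E), 0 < f (insert e ∅) - f ∅ := by
      intro e _
      rw [h0]
      simpa using hpos e
    have hCemp : ∀ e ∈ (∅ : Finset E), t₀ ≤ waterLevel f x e :=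
      fun e he => absurd he (notMem_empty e)
    have hkey : ∀ t : ℝ, 0 ≤ t → t ≤ t₀ → ∀ T : Finset E,
        t * (f (∅ ∪ T) - f T) ≤ ∑ a ∈ (∅ : Finset E) \ T, x a := by
      intro t _ _ T
      simp
    obtain ⟨w1, w2⟩ := auxChain f x hmono hsub h0 hpos hx
      (Finset.univ \ (∅ : Finset E)).card ∅ le_rfl t₀ hspan hcap hCemp hkey
    intro v
    rcases lt_or_ge v t₀ with hv | hv
    · have hres := w2 v hv
      have hfeq : Finset.univ.filter (fun e => e ∉ (∅ : Finset E) ∧ waterLevel f x e = v)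
          = Finset.univ.filter (fun e => waterLevel f x e = v) := by
        ext e
        simp
      rw [hfeq] at hres
      exact hres
    · have hfib : Finset.univ.filter (fun e => waterLevel f x e = v) = ∅ := by
        refine filter_eq_empty_iff.mpr ?_
        intro e _ hwe
        have h1 := w1 e (notMem_empty e)
        rw [hwe] at h1
        exact absurd hv (not_le.mpr h1)
      have hge : Finset.univ.filter (fun e => v ≤ waterLevel f x e) = ∅ := by
        refine filter_eq_empty_iff.mpr ?_
        intro e _ hle
        exact absurd hle (not_le.mpr (lt_of_lt_of_le (w1 e (notMem_empty e)) hv))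
      have hgt : Finset.univ.filter (fun e => v < waterLevel f x e) = ∅ := by
        refine filter_eq_empty_iff.mpr ?_
        intro e _ hlt
        exact absurd hlt (not_lt.mpr (le_of_lt (lt_of_lt_of_le (w1 e (notMem_empty e)) hv)))
      rw [hfib, hge, hgt]
      simp
open Classical in
lemma telescope (f : Finset E → ℝ) (h0 : f ∅ = 0) (w : E → ℝ) (s : ℝ) :
    f (Finset.univ.filter (fun e => s ≤ w e)) =
      ∑ v ∈ Finset.univ.image w, (if s ≤ v then
        f (Finset.univ.filter (fun e => v ≤ w e)) - f (Finset.univ.filter (fun e => v < w e))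
        else 0) := by
  set c : ℝ → ℝ := fun v =>
    f (Finset.univ.filter (fun e => v ≤ w e)) - f (Finset.univ.filter (fun e => v < w e))
    with hc
  suffices H : ∀ k : ℕ, ∀ s : ℝ, ((Finset.univ.image w).filter (fun v => s ≤ v)).card ≤ k →
      f (Finset.univ.filter (fun e => s ≤ w e)) =
        ∑ v ∈ Finset.univ.image w, (if s ≤ v then c v else 0) by
    exact H _ s le_rfl
  intro k
  induction k with
  | zero =>
    intro s hs
    have hemp : ((Finset.univ.image w).filter (fun v => s ≤ v)) = ∅ :=
      card_eq_zero.mp (Nat.le_zero.mp hs)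
    have h1 : Finset.univ.filter (fun e => s ≤ w e) = ∅ := by
      refine filter_eq_empty_iff.mpr ?_
      intro e _ hle
      have hmem : w e ∈ (Finset.univ.image w).filter (fun v => s ≤ v) :=
        mem_filter.mpr ⟨mem_image_of_mem w (mem_univ e), hle⟩
      rw [hemp] at hmem
      exact notMem_empty _ hmem
    rw [h1, h0]
    symm
    refine Finset.sum_eq_zero fun v hv => ?_
    rw [if_neg]
    intro hle
    have hmem : v ∈ (Finset.univ.image w).filter (fun v => s ≤ v) := mem_filter.mpr ⟨hv, hle⟩
    rw [hemp] at hmem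
    exact notMem_empty _ hmem
  | succ k ihk =>
    intro s hs
    by_cases hVs : ((Finset.univ.image w).filter (fun v => s ≤ v)) = ∅
    · have h1 : Finset.univ.filter (fun e => s ≤ w e) = ∅ := by
        refine filter_eq_empty_iff.mpr ?_
        intro e _ hle
        have hmem : w e ∈ (Finset.univ.image w).filter (fun v => s ≤ v) :=
          mem_filter.mpr ⟨mem_image_of_mem w (mem_univ e), hle⟩
        rw [hVs] at hmem
        exact notMem_empty _ hmem
      rw [h1, h0]
      symm
      refine Finset.sum_eq_zero fun v hv => ?_
      rw [if_neg]
      intro hle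
      have hmem : v ∈ (Finset.univ.image w).filter (fun v => s ≤ v) := mem_filter.mpr ⟨hv, hle⟩
      rw [hVs] at hmem
      exact notMem_empty _ hmem
    · have hVsne : ((Finset.univ.image w).filter (fun v => s ≤ v)).Nonempty :=
        nonempty_iff_ne_empty.mpr hVs
      set m : ℝ := ((Finset.univ.image w).filter (fun v => s ≤ v)).min' hVsne with hm
      have hmV : m ∈ (Finset.univ.image w).filter (fun v => s ≤ v) := Finset.min'_mem _ _
      have hms : s ≤ m := (mem_filter.mp hmV).2
      have hmimg : m ∈ Finset.univ.image w := (mem_filter.mp hmV).1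
      have hchoice : ∃ s' : ℝ, m < s' ∧ ∀ v ∈ Finset.univ.image w, (s' ≤ v ↔ m < v) := by
        by_cases hg : ((Finset.univ.image w).filter (fun v => m < v)).Nonempty
        · refine ⟨((Finset.univ.image w).filter (fun v => m < v)).min' hg,
            (mem_filter.mp (Finset.min'_mem _ _)).2, ?_⟩
          intro v hv
          constructor
          · intro h
            exact lt_of_lt_of_le (mem_filter.mp (Finset.min'_mem _ hg)).2 h
          · intro h
            exact Finset.min'_le _ v (mem_filter.mpr ⟨hv, h⟩)
        · refine ⟨m + 1, by linarith, ?_⟩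
          intro v hv
          constructor
          · intro h; linarith
          · intro h
            exact absurd ⟨v, mem_filter.mpr ⟨hv, h⟩⟩ hg
      obtain ⟨s', hms', hkey1⟩ := hchoice
      have hUgeq : Finset.univ.filter (fun e => s ≤ w e)
          = Finset.univ.filter (fun e => m ≤ w e) := by
        ext e
        simp only [mem_filter, mem_univ, true_and]
        constructor
        · intro h
          exact Finset.min'_le _ _ (mem_filter.mpr ⟨mem_image_of_mem w (mem_univ e), h⟩)
        · intro h
          exact le_trans hms h
      have hUgt : Finset.univ.filter (fun e => m < w e)
          = Finset.univ.filter (fun e => s' ≤ w e) := by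
        ext e
        simp only [mem_filter, mem_univ, true_and]
        exact (hkey1 (w e) (mem_image_of_mem w (mem_univ e))).symm
      have hcard' : ((Finset.univ.image w).filter (fun v => s' ≤ v)).card ≤ k := by
        have hset : (Finset.univ.image w).filter (fun v => s' ≤ v)
            = ((Finset.univ.image w).filter (fun v => s ≤ v)).erase m := by
          ext v
          simp only [mem_filter, mem_erase]
          constructor
          · rintro ⟨hv, hs'v⟩
            have hmv : m < v := (hkey1 v hv).mp hs'v
            exact ⟨hmv.ne', hv, le_trans hms hmv.le⟩
          · rintro ⟨hne, hv, hsv⟩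
            refine ⟨hv, (hkey1 v hv).mpr ?_⟩
            exact lt_of_le_of_ne (Finset.min'_le _ _ (mem_filter.mpr ⟨hv, hsv⟩)) (Ne.symm hne)
        rw [hset, card_erase_of_mem hmV]
        omega
      have ihs' := ihk s' hcard'
      have hcm : f (Finset.univ.filter (fun e => m ≤ w e))
          = c m + f (Finset.univ.filter (fun e => s' ≤ w e)) := by
        have h1 : c m = f (Finset.univ.filter (fun e => m ≤ w e))
            - f (Finset.univ.filter (fun e => m < w e)) := rfl
        rw [hUgt] at h1
        linarith
      have hsum : (∑ v ∈ Finset.univ.image w, (if s ≤ v then c v else 0))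
          = c m + ∑ v ∈ Finset.univ.image w, (if s' ≤ v then c v else 0) := by
        have hpt : ∀ v ∈ Finset.univ.image w,
            (if s ≤ v then c v else 0)
              = (if v = m then c m else 0) + (if s' ≤ v then c v else 0) := by
          intro v hv
          by_cases hvm : v = m
          · subst hvm
            rw [if_pos rfl, if_pos hms, if_neg (not_le.mpr hms')]
            ring
          · rw [if_neg hvm]
            by_cases hs'v : s' ≤ v
            · have hmv : m < v := (hkey1 v hv).mp hs'v
              rw [if_pos (le_trans hms hmv.le), if_pos hs'v]
              ring
            · rw [if_neg hs'v]
              by_cases hsv : s ≤ v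
              · exfalso
                have hmlev : m ≤ v := Finset.min'_le _ _ (mem_filter.mpr ⟨hv, hsv⟩)
                have hmv : m < v := lt_of_le_of_ne hmlev (Ne.symm hvm)
                exact hs'v ((hkey1 v hv).mpr hmv)
              · rw [if_neg hsv]
                ring
        rw [Finset.sum_congr rfl hpt, Finset.sum_add_distrib]
        congr 1
        rw [Finset.sum_eq_single_of_mem m hmimg]
        · rw [if_pos rfl]
        · intro v _ hvm
          rw [if_neg hvm]
      rw [hUgeq, hcm, ihs', hsum]
lemma integ_step (c : ℝ) (v : ℝ) (hv : 0 ≤ v) :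
    ∫ s in Set.Ioi (0:ℝ), (if s ≤ v then c else 0) = c * v := by
  have hfun : (fun s : ℝ => if s ≤ v then c else 0)
      = Set.indicator (Set.Iic v) (fun _ => c) := by
    funext s
    simp [Set.indicator_apply, Set.mem_Iic]
  rw [hfun, MeasureTheory.setIntegral_indicator measurableSet_Iic]
  rw [MeasureTheory.setIntegral_const]
  rw [Set.Ioi_inter_Iic, Real.volume_real_Ioc]
  rw [max_eq_left (by linarith)]
  rw [smul_eq_mul]
  ring
lemma integ_integrable (c : ℝ) (v : ℝ) :
    MeasureTheory.IntegrableOn (fun s : ℝ => if s ≤ v then c else 0) (Set.Ioi (0:ℝ)) := by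
  have hfun : (fun s : ℝ => if s ≤ v then c else 0)
      = Set.indicator (Set.Iic v) (fun _ => c) := by
    funext s
    simp [Set.indicator_apply, Set.mem_Iic]
  rw [hfun]
  rw [MeasureTheory.IntegrableOn, MeasureTheory.integrable_indicator_iff measurableSet_Iic]
  refine (MeasureTheory.integrableOn_const_iff).mpr (Or.inr ?_)
  rw [MeasureTheory.Measure.restrict_apply measurableSet_Iic]
  rw [Set.Iic_inter_Ioi, Real.volume_Ioc]
  exact ENNReal.ofReal_lt_top

open Classical in
theorem lovasz_waterLevel_duality (f : Finset E → ℝ) (x : E → ℝ)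
    (hmono : ∀ A B : Finset E, A ⊆ B → f A ≤ f B)
    (hsub : ∀ A B : Finset E, f (A ∪ B) + f (A ∩ B) ≤ f A + f B)
    (h0 : f ∅ = 0) (hpos : ∀ e : E, 0 < f {e}) (hx : ∀ e, 0 ≤ x e) :
    lovasz f (waterLevel f x) = ∑ e : E, x e := by
  have hK := fiber_eq f x hmono hsub h0 hpos hx
  have hwnn : ∀ e, 0 ≤ waterLevel f x e := waterLevel_nonneg hmono h0 hpos hx
  set w := waterLevel f x with hw
  unfold lovasz
  have htel : (fun t : ℝ => f (Finset.univ.filter (fun e => t ≤ w e)))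
      = fun t : ℝ => ∑ v ∈ Finset.univ.image w, (if t ≤ v then
        f (Finset.univ.filter (fun e => v ≤ w e)) - f (Finset.univ.filter (fun e => v < w e))
        else 0) := funext (telescope f h0 w)
  rw [htel]
  rw [MeasureTheory.integral_finset_sum _ (fun v _ => integ_integrable _ v)]
  have hstep : ∀ v ∈ Finset.univ.image w,
      (∫ t in Set.Ioi (0:ℝ), (if t ≤ v then
        f (Finset.univ.filter (fun e => v ≤ w e)) - f (Finset.univ.filter (fun e => v < w e))
        else 0))
      = ∑ e ∈ Finset.univ.filter (fun e => w e = v), x e := by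
    intro v hv
    obtain ⟨e, _, rfl⟩ := Finset.mem_image.mp hv
    rw [integ_step _ _ (hwnn e)]
    rw [mul_comm]
    exact (hK (w e)).symm
  rw [Finset.sum_congr rfl hstep]
  exact Finset.sum_fiberwise_of_maps_to (fun e _ => mem_image_of_mem w (mem_univ e)) x
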